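/- If there exists a doubly regular asymmetric digraph with parameters (4n², 2n²−n, n²−n) whose vertex set is partitioned into 2n disjoint cocliques of size 2n, then there exists a skew-Bush-type Hadamard matrix of order 4n². Concretely, after ordering the vertices so that A + I_{2n} ⊗ J_{2n} is a (0,1)-matrix, the matrix H = A − A^T + I_{2n} ⊗ J_{2n} is a skew-Bush-type Hadamard matrix. -/

import Mathlib

open Matrix Finset

private lemma block_sum {m : ℕ} (g : Fin m × Fin m → ℝ) (i : Fin m) :
    ∑ z : Fin m × Fin m, (if z.1 = i then g z else 0) = ∑ b, g (i, b) := by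
  rw [Fintype.sum_prod_type]
  rw [Finset.sum_eq_single i]
  · simp
  · intro c _ hc; simp [hc]
  · intro h; exact absurd (Finset.mem_univ i) h

private lemma prod_sum_fst {m : ℕ} (f : Fin m → ℝ) :
    ∑ z : Fin m × Fin m, f z.1 = (m : ℝ) * ∑ j, f j := by
  rw [Fintype.sum_prod_type]
  simp [Finset.sum_const, Finset.card_univ, nsmul_eq_mul, Finset.mul_sum]

theorem drad_to_skew_bush_hadamard (n : ℕ) (hn : 0 < n)
    (A : Matrix (Fin (2 * n) × Fin (2 * n)) (Fin (2 * n) × Fin (2 * n)) ℝ)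
    (h01 : ∀ x y, A x y = 0 ∨ A x y = 1)
    (hdiag : ∀ x, A x x = 0)
    (hblocks : A + Aᵀ = (Matrix.of fun _ _ => (1 : ℝ))
      - Matrix.of (fun x y : Fin (2 * n) × Fin (2 * n) => if x.1 = y.1 then (1 : ℝ) else 0))
    (hdesign : A * Aᵀ = ((2 * n ^ 2 - n : ℝ)) • 1
      + ((n ^ 2 - n : ℝ)) • ((Matrix.of fun _ _ => (1 : ℝ)) - 1))
    (H : Matrix (Fin (2 * n) × Fin (2 * n)) (Fin (2 * n) × Fin (2 * n)) ℝ)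
    (hH : H = A - Aᵀ
      + Matrix.of (fun x y : Fin (2 * n) × Fin (2 * n) => if x.1 = y.1 then (1 : ℝ) else 0)) :
    (∀ x y, H x y = 1 ∨ H x y = -1) ∧
    (H * Hᵀ = ((4 * n ^ 2 : ℝ)) • 1) ∧
    (∀ (i : Fin (2 * n)) (a b : Fin (2 * n)), H (i, a) (i, b) = 1) ∧
    (∀ i j : Fin (2 * n), i ≠ j →
      (∀ a, ∑ b, H (i, a) (j, b) = 0) ∧ (∀ b, ∑ a, H (i, a) (j, b) = 0)) ∧
    (∀ x y : Fin (2 * n) × Fin (2 * n), x.1 ≠ y.1 → H x y = -H y x) := by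
  have hn' : (0:ℝ) < (n:ℝ) := by exact_mod_cast hn
  set J : Matrix (Fin (2 * n) × Fin (2 * n)) (Fin (2 * n) × Fin (2 * n)) ℝ :=
    Matrix.of fun _ _ => (1 : ℝ) with hJdef
  set B : Matrix (Fin (2 * n) × Fin (2 * n)) (Fin (2 * n) × Fin (2 * n)) ℝ :=
    Matrix.of (fun x y : Fin (2 * n) × Fin (2 * n) => if x.1 = y.1 then (1 : ℝ) else 0) with hBdef
  -- pointwise facts
  have hAadd : ∀ x y, A x y + A y x = 1 - (if x.1 = y.1 then (1:ℝ) else 0) := by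
    intro x y
    have h := congrFun (congrFun hblocks x) y
    simpa [Matrix.add_apply, Matrix.sub_apply, Matrix.transpose_apply, hJdef, hBdef] using h
  have hHapp : ∀ x y, H x y = A x y - A y x + (if x.1 = y.1 then (1:ℝ) else 0) := by
    intro x y
    rw [hH]
    simp [Matrix.add_apply, Matrix.sub_apply, Matrix.transpose_apply, hBdef]
  have hblockone : ∀ (i : Fin (2*n)) (a b : Fin (2*n)), H (i, a) (i, b) = 1 := by
    intro i a b
    have h := hAadd (i, a) (i, b)
    simp only [if_pos rfl] at h
    rw [hHapp, if_pos rfl]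
    rcases h01 (i,a) (i,b) with h1 | h1 <;> rcases h01 (i,b) (i,a) with h2 | h2 <;>
      rw [h1, h2] at h ⊢ <;> norm_num at h <;> norm_num
  have hpm : ∀ x y, H x y = 1 ∨ H x y = -1 := by
    intro x y
    by_cases hxy : x.1 = y.1
    · left
      obtain ⟨x1, x2⟩ := x; obtain ⟨y1, y2⟩ := y
      simp only at hxy; subst hxy
      exact hblockone x1 x2 y2
    · have h := hAadd x y
      rw [if_neg hxy] at h
      rw [hHapp, if_neg hxy]
      rcases h01 x y with h1 | h1 <;> rcases h01 y x with h2 | h2 <;>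
        rw [h1, h2] at h ⊢ <;> norm_num at h <;> norm_num
  have hskew : ∀ x y : Fin (2*n) × Fin (2*n), x.1 ≠ y.1 → H x y = -H y x := by
    intro x y hxy
    rw [hHapp, hHapp, if_neg hxy, if_neg (fun h => hxy h.symm)]
    ring
  -- symmetric matrices
  have hJsymm : Jᵀ = J := by ext x y; simp [hJdef]
  have hBsymm : Bᵀ = B := by
    ext x y
    simp only [Matrix.transpose_apply, hBdef, Matrix.of_apply]
    exact if_congr eq_comm rfl rfl
  -- row sums of A
  have hrow : ∀ x, ∑ z, A x z = (2 * (n:ℝ) ^ 2 - n) := by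
    intro x
    have h1 : (A * Aᵀ) x x = 2 * (n:ℝ) ^ 2 - n := by
      rw [hdesign]
      simp [Matrix.add_apply, Matrix.smul_apply, Matrix.sub_apply, Matrix.one_apply_eq, hJdef]
    rw [Matrix.mul_apply] at h1
    rw [← h1]
    refine Finset.sum_congr rfl fun z _ => ?_
    rcases h01 x z with h | h <;> simp [Matrix.transpose_apply, h]
  have hAJ : A * J = (2 * (n:ℝ) ^ 2 - n) • J := by
    ext x y
    rw [Matrix.mul_apply]
    simp only [hJdef, Matrix.smul_apply, Matrix.of_apply, mul_one, smul_eq_mul]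
    rw [hrow x]
  have hJAt : J * Aᵀ = (2 * (n:ℝ) ^ 2 - n) • J := by
    ext x y
    rw [Matrix.mul_apply]
    simp only [hJdef, Matrix.smul_apply, Matrix.of_apply, Matrix.transpose_apply, one_mul,
      smul_eq_mul, mul_one]
    rw [hrow y]
  have hJJ : J * J = (4 * (n:ℝ) ^ 2) • J := by
    ext x y
    rw [Matrix.mul_apply]
    simp only [hJdef, Matrix.smul_apply, Matrix.of_apply, mul_one, smul_eq_mul]
    rw [Finset.sum_const, Finset.card_univ]
    simp [Fintype.card_prod]
    push_cast
    ring
  have hBB : B * B = (2 * (n:ℝ)) • B := by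
    ext x y
    rw [Matrix.mul_apply]
    have he : ∀ z : Fin (2*n) × Fin (2*n),
        B x z * B z y = if z.1 = x.1 then (if x.1 = y.1 then (1:ℝ) else 0) else 0 := by
      intro z
      simp only [hBdef, Matrix.of_apply]
      by_cases h : x.1 = z.1
      · rw [if_pos h, if_pos h.symm, one_mul, ← h]
      · rw [if_neg h, zero_mul, if_neg (fun h' : z.1 = x.1 => h h'.symm)]
    rw [Finset.sum_congr rfl fun z _ => he z,
      block_sum (fun _ => if x.1 = y.1 then (1:ℝ) else 0) x.1]
    simp only [Finset.sum_const, Finset.card_univ, Fintype.card_fin, nsmul_eq_mul,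
      Matrix.smul_apply, hBdef, Matrix.of_apply, smul_eq_mul]
    push_cast
    ring
  -- H in terms of A and J
  have hAt : Aᵀ = J - B - A := by rw [← hblocks]; abel
  have hHt : Hᵀ = J - (2:ℝ) • A := by
    rw [hH]
    rw [Matrix.transpose_add, Matrix.transpose_sub, Matrix.transpose_transpose]
    rw [show (Matrix.of (fun x y : Fin (2 * n) × Fin (2 * n) =>
      if x.1 = y.1 then (1 : ℝ) else 0))ᵀ = B from hBsymm]
    rw [hAt]
    module
  have hH2 : H = J - (2:ℝ) • Aᵀ := by
    have h := congrArg Matrix.transpose hHt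
    rwa [Matrix.transpose_transpose, Matrix.transpose_sub, Matrix.transpose_smul, hJsymm] at h
  have hHtH : Hᵀ * H = (4 * (n:ℝ) ^ 2) • 1 := by
    rw [hHt, hH2]
    simp only [Matrix.sub_mul, Matrix.mul_sub, Matrix.smul_mul, Matrix.mul_smul, smul_smul]
    rw [hJJ, hAJ, hJAt, hdesign]
    match_scalars <;> push_cast <;> ring
  have h4 : (0:ℝ) < 4 * (n:ℝ) ^ 2 := by positivity
  have hHHt : H * Hᵀ = (4 * (n:ℝ) ^ 2) • 1 := by
    have h1 : ((4 * (n:ℝ) ^ 2)⁻¹ • Hᵀ) * H = 1 := by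
      rw [Matrix.smul_mul, hHtH, smul_smul, inv_mul_cancel₀ (ne_of_gt h4), one_smul]
    have h2 : H * ((4 * (n:ℝ) ^ 2)⁻¹ • Hᵀ) = 1 := mul_eq_one_comm.mp h1
    calc H * Hᵀ = (4 * (n:ℝ) ^ 2) • (H * ((4 * (n:ℝ) ^ 2)⁻¹ • Hᵀ)) := by
          rw [Matrix.mul_smul, smul_smul, mul_inv_cancel₀ (ne_of_gt h4), one_smul]
      _ = _ := by rw [h2]
  have hHplus : H + Hᵀ = (2:ℝ) • B := by
    have hB' : B = J - (A + Aᵀ) := by rw [hblocks]; abel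
    rw [hHt, hH2, hB']
    module
  have halfstep : (2:ℝ) • (H * B * Hᵀ) = (8 * (n:ℝ) ^ 2) • B := by
    have e : H * ((2:ℝ) • B) * Hᵀ = (8 * (n:ℝ) ^ 2) • B := by
      rw [← hHplus, Matrix.mul_add, Matrix.add_mul, Matrix.mul_assoc H H Hᵀ, hHHt,
        Matrix.mul_smul, Matrix.mul_one, Matrix.smul_mul, Matrix.one_mul, ← smul_add, hHplus,
        smul_smul]
      match_scalars
      ring
    rw [Matrix.mul_smul, Matrix.smul_mul] at e
    exact e
  have hmid : H * B * Hᵀ = (4 * (n:ℝ) ^ 2) • B := by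
    calc H * B * Hᵀ = (2:ℝ)⁻¹ • ((2:ℝ) • (H * B * Hᵀ)) := by rw [smul_smul]; norm_num
      _ = (2:ℝ)⁻¹ • ((8 * (n:ℝ) ^ 2) • B) := by rw [halfstep]
      _ = _ := by rw [smul_smul]; match_scalars; ring
  have key1 : (H * B) * (H * B)ᵀ = (8 * (n:ℝ) ^ 3) • B := by
    rw [Matrix.transpose_mul, hBsymm]
    calc H * B * (B * Hᵀ) = H * (B * B) * Hᵀ := by simp only [Matrix.mul_assoc]
      _ = (2 * (n:ℝ)) • (H * B * Hᵀ) := by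
          rw [hBB, Matrix.mul_smul, Matrix.smul_mul]
      _ = (2 * (n:ℝ)) • ((4 * (n:ℝ) ^ 2) • B) := by rw [hmid]
      _ = _ := by rw [smul_smul]; match_scalars; ring
  have halfstep2 : (2:ℝ) • (Hᵀ * B * H) = (8 * (n:ℝ) ^ 2) • B := by
    have e : Hᵀ * ((2:ℝ) • B) * H = (8 * (n:ℝ) ^ 2) • B := by
      rw [← hHplus, Matrix.mul_add, Matrix.add_mul]
      rw [hHtH, Matrix.smul_mul, Matrix.one_mul, Matrix.mul_assoc Hᵀ Hᵀ H, hHtH,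
        Matrix.mul_smul, Matrix.mul_one, ← smul_add, hHplus, smul_smul]
      match_scalars
      ring
    rw [Matrix.mul_smul, Matrix.smul_mul] at e
    exact e
  have hmid2 : Hᵀ * B * H = (4 * (n:ℝ) ^ 2) • B := by
    calc Hᵀ * B * H = (2:ℝ)⁻¹ • ((2:ℝ) • (Hᵀ * B * H)) := by rw [smul_smul]; norm_num
      _ = (2:ℝ)⁻¹ • ((8 * (n:ℝ) ^ 2) • B) := by rw [halfstep2]
      _ = _ := by rw [smul_smul]; match_scalars; ring
  have key2 : (B * H)ᵀ * (B * H) = (8 * (n:ℝ) ^ 3) • B := by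
    rw [Matrix.transpose_mul, hBsymm]
    calc Hᵀ * B * (B * H) = Hᵀ * (B * B) * H := by simp only [Matrix.mul_assoc]
      _ = (2 * (n:ℝ)) • (Hᵀ * B * H) := by
          rw [hBB, Matrix.mul_smul, Matrix.smul_mul]
      _ = (2 * (n:ℝ)) • ((4 * (n:ℝ) ^ 2) • B) := by rw [hmid2]
      _ = _ := by rw [smul_smul]; match_scalars; ring
  refine ⟨hpm, hHHt, hblockone, ?_, hskew⟩
  intro i j hij
  constructor
  · -- row sums in off-diagonal blocks vanish
    intro a
    have hHB : ∀ y : Fin (2*n) × Fin (2*n), (H * B) (i,a) y = ∑ b, H (i,a) (y.1, b) := by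
      intro y
      rw [Matrix.mul_apply]
      have he : ∀ z : Fin (2*n) × Fin (2*n),
          H (i,a) z * B z y = if z.1 = y.1 then H (i,a) (y.1, z.2) else 0 := by
        intro z
        obtain ⟨z1, z2⟩ := z
        simp only [hBdef, Matrix.of_apply]
        by_cases h : z1 = y.1
        · subst h; simp
        · simp [h]
      rw [Finset.sum_congr rfl fun z _ => he z, block_sum (fun z => H (i,a) (y.1, z.2)) y.1]
    have hdval : ∑ y : Fin (2*n) × Fin (2*n), ((H * B) (i,a) y)^2 = 8 * (n:ℝ)^3 := by
      have h := congrFun (congrFun key1 (i,a)) (i,a)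
      rw [Matrix.mul_apply] at h
      rw [show ((8 * (n:ℝ)^3) • B) (i,a) (i,a) = 8 * (n:ℝ)^3 by simp [hBdef]] at h
      rw [← h]
      refine Finset.sum_congr rfl fun y _ => ?_
      rw [Matrix.transpose_apply, sq]
    set s : Fin (2*n) → ℝ := fun j' => ∑ b, H (i,a) (j', b) with hsdef
    have h5 : ((2*n : ℕ) : ℝ) * ∑ j', (s j')^2 = 8 * (n:ℝ)^3 := by
      rw [← prod_sum_fst (fun j' => (s j')^2), ← hdval]
      exact Finset.sum_congr rfl fun y _ => by rw [hHB y]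
    have h2ncast : ((2*n : ℕ) : ℝ) = 2 * (n:ℝ) := by push_cast; ring
    rw [h2ncast] at h5
    have h6 : ∑ j', (s j')^2 = 4 * (n:ℝ)^2 := by
      apply mul_left_cancel₀ (a := 2 * (n:ℝ)) (by positivity)
      rw [h5]; ring
    have hsi : s i = 2 * (n:ℝ) := by
      simp only [hsdef, hblockone]
      rw [Finset.sum_const, Finset.card_univ, Fintype.card_fin, nsmul_eq_mul, mul_one]
      push_cast; ring
    have h8 := Finset.add_sum_erase Finset.univ (fun j' => (s j')^2) (Finset.mem_univ i)
    simp only [h6, hsi] at h8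
    have h7 : ∑ j' ∈ Finset.univ.erase i, (s j')^2 = 0 := by nlinarith [h8]
    have h9 := (Finset.sum_eq_zero_iff_of_nonneg (fun j' _ => sq_nonneg (s j'))).mp h7 j
      (Finset.mem_erase.mpr ⟨Ne.symm hij, Finset.mem_univ j⟩)
    exact sq_eq_zero_iff.mp h9
  · -- column sums in off-diagonal blocks vanish
    intro b
    have hBH : ∀ x : Fin (2*n) × Fin (2*n), (B * H) x (j,b) = ∑ a, H (x.1, a) (j,b) := by
      intro x
      rw [Matrix.mul_apply]
      have he : ∀ z : Fin (2*n) × Fin (2*n),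
          B x z * H z (j,b) = if z.1 = x.1 then H (x.1, z.2) (j,b) else 0 := by
        intro z
        obtain ⟨z1, z2⟩ := z
        simp only [hBdef, Matrix.of_apply]
        by_cases h : z1 = x.1
        · subst h; simp
        · rw [if_neg (fun h' : x.1 = z1 => h h'.symm), zero_mul, if_neg h]
      rw [Finset.sum_congr rfl fun z _ => he z, block_sum (fun z => H (x.1, z.2) (j,b)) x.1]
    have hdval : ∑ x : Fin (2*n) × Fin (2*n), ((B * H) x (j,b))^2 = 8 * (n:ℝ)^3 := by
      have h := congrFun (congrFun key2 (j,b)) (j,b)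
      rw [Matrix.mul_apply] at h
      rw [show ((8 * (n:ℝ)^3) • B) (j,b) (j,b) = 8 * (n:ℝ)^3 by simp [hBdef]] at h
      rw [← h]
      refine Finset.sum_congr rfl fun x _ => ?_
      rw [Matrix.transpose_apply, sq]
    set t : Fin (2*n) → ℝ := fun i' => ∑ a, H (i', a) (j, b) with htdef
    have h5 : ((2*n : ℕ) : ℝ) * ∑ i', (t i')^2 = 8 * (n:ℝ)^3 := by
      rw [← prod_sum_fst (fun i' => (t i')^2), ← hdval]
      exact Finset.sum_congr rfl fun x _ => by rw [hBH x]
    have h2ncast : ((2*n : ℕ) : ℝ) = 2 * (n:ℝ) := by push_cast; ring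
    rw [h2ncast] at h5
    have h6 : ∑ i', (t i')^2 = 4 * (n:ℝ)^2 := by
      apply mul_left_cancel₀ (a := 2 * (n:ℝ)) (by positivity)
      rw [h5]; ring
    have htj : t j = 2 * (n:ℝ) := by
      simp only [htdef, hblockone]
      rw [Finset.sum_const, Finset.card_univ, Fintype.card_fin, nsmul_eq_mul, mul_one]
      push_cast; ring
    have h8 := Finset.add_sum_erase Finset.univ (fun i' => (t i')^2) (Finset.mem_univ j)
    simp only [h6, htj] at h8
    have h7 : ∑ i' ∈ Finset.univ.erase j, (t i')^2 = 0 := by nlinarith [h8]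
    have h9 := (Finset.sum_eq_zero_iff_of_nonneg (fun i' _ => sq_nonneg (t i'))).mp h7 i
      (Finset.mem_erase.mpr ⟨hij, Finset.mem_univ i⟩)
    exact sq_eq_zero_iff.mp h9
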